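/- Let q ∈ ℂ× be not a root of unity. Every finite multiset S of elements of ℂ× (i.e. every finitely supported function S : ℂ× → ℕ) admits a decomposition as a multiset union of q-strings S_{n₁,a₁}, …, S_{n_s,a_s} (counted with multiplicity, so that for each c ∈ ℂ×, S(c) equals the number of indices t with c ∈ S_{n_t,a_t}) such that any two of the q-strings in the decomposition are in general position; moreover this decomposition is unique as a finite multiset of pairs (n_t, a_t) ∈ ℕ⁺ × ℂ×. -/

import Mathlib

open scoped Classical

/-- The `q`-string `S_{n,a} = {a, q²a, …, q^{2(n-1)}a} ⊆ ℂ×`. -/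
def qString (q : ℂˣ) (n : ℕ) (a : ℂˣ) : Set ℂˣ :=
  {b | ∃ k, k < n ∧ b = q ^ (2 * k) * a}

/-- Two `q`-strings `S_{n,a}` and `S_{m,b}` are in special position if neither is
contained in the other and their union is again a `q`-string. -/
def SpecialPosition (q : ℂˣ) (n : ℕ) (a : ℂˣ) (m : ℕ) (b : ℂˣ) : Prop :=
  ¬ qString q n a ⊆ qString q m b ∧ ¬ qString q m b ⊆ qString q n a ∧
    ∃ k c, 1 ≤ k ∧ qString q n a ∪ qString q m b = qString q k c

/-- Two `q`-strings are in general position if they are not in special position. -/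
def GeneralPosition (q : ℂˣ) (n : ℕ) (a : ℂˣ) (m : ℕ) (b : ℂˣ) : Prop :=
  ¬ SpecialPosition q n a m b

namespace QSAux

variable {q : ℂˣ}

/-- The shift `fQ q a z = q^(2z) a`. -/
def fQ (q a : ℂˣ) (z : ℤ) : ℂˣ := q ^ (2 * z) * a

lemma fQ_zero (a : ℂˣ) : fQ q a 0 = a := by simp [fQ]

lemma fQ_fQ (a : ℂˣ) (w z : ℤ) : fQ q (fQ q a w) z = fQ q a (z + w) := by
  show q ^ (2*z) * (q ^ (2*w) * a) = q ^ (2*(z+w)) * a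
  rw [← mul_assoc, ← zpow_add]
  congr 2
  ring

lemma fQ_natCast (b : ℂˣ) (k : ℕ) : fQ q b (k : ℤ) = q ^ (2*k) * b := by
  rw [fQ, show (2 * (k:ℤ)) = ((2*k : ℕ) : ℤ) by push_cast; ring, zpow_natCast]

lemma zpow_ne_one (hq : ∀ k : ℕ, 1 ≤ k → q ^ k ≠ 1) {z : ℤ} (hz : z ≠ 0) : q ^ z ≠ 1 := by
  intro h
  rcases lt_or_gt_of_ne hz with hneg | hpos
  · apply hq (-z).toNat (by omega)
    rw [← zpow_natCast, Int.toNat_of_nonneg (by omega), zpow_neg, h, inv_one]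
  · apply hq z.toNat (by omega)
    rw [← zpow_natCast, Int.toNat_of_nonneg (by omega)]
    exact h

lemma fQ_inj (hq : ∀ k : ℕ, 1 ≤ k → q ^ k ≠ 1) (a : ℂˣ) : Function.Injective (fQ q a) := by
  intro z w h
  have h2 : q ^ (2*z) = q ^ (2*w) := mul_right_cancel h
  by_contra hzw
  have h3 : q ^ (2*z - 2*w) = 1 := by rw [zpow_sub, h2]; simp
  exact zpow_ne_one hq (by omega) h3

lemma qString_image (a : ℂˣ) (j : ℤ) (n : ℕ) :
    qString q n (fQ q a j) = fQ q a '' Set.Ico j (j + n) := by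
  ext b
  simp only [qString, Set.mem_setOf_eq, Set.mem_image, Set.mem_Ico]
  constructor
  · rintro ⟨k, hk, rfl⟩
    refine ⟨j + k, ⟨by omega, by omega⟩, ?_⟩
    rw [← fQ_natCast, fQ_fQ]
    congr 1
    ring
  · rintro ⟨z, ⟨h1, h2⟩, rfl⟩
    refine ⟨(z - j).toNat, by omega, ?_⟩
    rw [← fQ_natCast, fQ_fQ]
    congr 1
    omega

lemma qString_base (a : ℂˣ) (n : ℕ) : qString q n a = fQ q a '' Set.Ico (0:ℤ) n := by
  have := qString_image (q := q) a 0 n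
  rwa [fQ_zero, zero_add] at this

lemma mem_self {n : ℕ} (hn : 1 ≤ n) (a : ℂˣ) : a ∈ qString q n a := by
  refine ⟨0, hn, ?_⟩
  simp

lemma exists_coord {x b : ℂˣ} {n : ℕ} (h : x ∈ qString q n b) :
    ∃ i : ℤ, b = fQ q x i ∧ i ≤ 0 ∧ 0 < i + n := by
  obtain ⟨k, hk, hx⟩ := h
  refine ⟨-(k:ℤ), ?_, by omega, by omega⟩
  rw [hx, ← fQ_natCast, fQ_fQ]
  simp [fQ_zero]

lemma subset_iff (hq : ∀ k : ℕ, 1 ≤ k → q ^ k ≠ 1) (a : ℂˣ) {u v : ℤ} {n m : ℕ} (hn : 0 < n) :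
    qString q n (fQ q a u) ⊆ qString q m (fQ q a v) ↔ v ≤ u ∧ u + (n:ℤ) ≤ v + m := by
  rw [qString_image, qString_image, Set.image_subset_image_iff (fQ_inj hq a),
    Set.Ico_subset_Ico_iff (by omega : u < u + (n:ℤ))]

lemma special_of_touching (hq : ∀ k : ℕ, 1 ≤ k → q ^ k ≠ 1) (a : ℂˣ) {u v : ℤ} {n m : ℕ}
    (hn : 0 < n) (hm : 0 < m)
    (touch1 : v ≤ u + n) (touch2 : u ≤ v + m)
    (h1 : ¬ (v ≤ u ∧ u + (n:ℤ) ≤ v + m)) (h2 : ¬ (u ≤ v ∧ v + (m:ℤ) ≤ u + n)) :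
    SpecialPosition q n (fQ q a u) m (fQ q a v) := by
  refine ⟨by rw [subset_iff hq a hn]; exact h1, by rw [subset_iff hq a hm]; exact h2,
    (max (u + n) (v + m) - min u v).toNat, fQ q a (min u v), by omega, ?_⟩
  rw [qString_image, qString_image, qString_image, ← Set.image_union]
  have hset : Set.Ico u (u + (n:ℤ)) ∪ Set.Ico v (v + (m:ℤ)) =
      Set.Ico (min u v) (min u v + (((max (u + n) (v + m) - min u v).toNat : ℕ) : ℤ)) := by
    ext x
    simp only [Set.mem_union, Set.mem_Ico]
    omega
  rw [hset]

lemma special_symm {n m : ℕ} {a b : ℂˣ} (h : SpecialPosition q n a m b) :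
    SpecialPosition q m b n a := by
  obtain ⟨h1, h2, k, c, hk, hu⟩ := h
  exact ⟨h2, h1, k, c, hk, by rw [Set.union_comm]; exact hu⟩

lemma gp_self {n : ℕ} {a : ℂˣ} : GeneralPosition q n a n a := by
  rintro ⟨h, -, -⟩
  exact h subset_rfl

lemma gp_symm {n m : ℕ} {a b : ℂˣ} (h : GeneralPosition q n a m b) :
    GeneralPosition q m b n a := fun hs => h (special_symm hs)

/-- A string fully inside the support is in general position with a maximal run. -/
lemma gp_run (hq : ∀ k : ℕ, 1 ≤ k → q ^ k ≠ 1) {S : ℂˣ → ℕ} {n₀ : ℕ} {a₀ : ℂˣ} (hn₀ : 0 < n₀)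
    (hbl : S (fQ q a₀ (-1)) = 0) (hbr : S (fQ q a₀ (n₀ : ℤ)) = 0)
    {m : ℕ} {b : ℂˣ} (hm : 0 < m) (hsub : ∀ c ∈ qString q m b, S c ≠ 0) :
    GeneralPosition q m b n₀ a₀ := by
  rintro ⟨hns1, hns2, k, c, hk, hu⟩
  have ha₀ : a₀ ∈ qString q k c := by
    rw [← hu]; exact Set.mem_union_right _ (mem_self hn₀ a₀)
  obtain ⟨w, hcw, hw0, hwk⟩ := exists_coord ha₀
  have hb : b ∈ qString q k c := by
    rw [← hu]; exact Set.mem_union_left _ (mem_self hm b)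
  rw [hcw, qString_image] at hb
  obtain ⟨s, hs, hbs⟩ := hb
  rw [hcw, ← hbs, qString_image, qString_base, qString_image, ← Set.image_union] at hu
  have E := Set.image_injective.mpr (fQ_inj hq a₀) hu
  have hxmem := Set.ext_iff.mp E
  simp only [Set.mem_union, Set.mem_Ico] at hxmem
  have hstrict : ∃ x : ℤ, (s ≤ x ∧ x < s + m) ∧ (x < 0 ∨ (n₀:ℤ) ≤ x) := by
    by_contra hcon
    push_neg at hcon
    apply hns1
    rw [← hbs, qString_image, qString_base, Set.image_subset_image_iff (fQ_inj hq a₀)]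
    intro x hx
    simp only [Set.mem_Ico] at hx ⊢
    have := hcon x hx
    omega
  obtain ⟨x, hx1, hx2⟩ := hstrict
  have hxw := (hxmem x).mp (Or.inl hx1)
  have h0 := (hxmem 0).mp (Or.inr ⟨le_refl 0, by exact_mod_cast hn₀⟩)
  have hmemstr : ∀ y : ℤ, s ≤ y → y < s + m → S (fQ q a₀ y) ≠ 0 := by
    intro y h1 h2
    apply hsub
    rw [← hbs, qString_image]
    exact ⟨y, by simp only [Set.mem_Ico]; omega, rfl⟩
  rcases hx2 with hneg | hpos
  · have hy := (hxmem (-1)).mpr ⟨by omega, by omega⟩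
    rcases hy with hy | hy
    · exact hmemstr (-1) hy.1 hy.2 hbl
    · omega
  · have hy := (hxmem (n₀:ℤ)).mpr ⟨by omega, by omega⟩
    rcases hy with hy | hy
    · exact hmemstr _ hy.1 hy.2 hbr
    · omega

def Good (q : ℂˣ) (S : ℂˣ → ℕ) (D : Multiset (ℕ × ℂˣ)) : Prop :=
  (∀ p ∈ D, 1 ≤ p.1) ∧
  (∀ c : ℂˣ, S c = Multiset.card (D.filter fun p => c ∈ qString q p.1 p.2)) ∧
  (∀ p ∈ D, ∀ p' ∈ D, GeneralPosition q p.1 p.2 p'.1 p'.2)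

lemma cover {S : ℂˣ → ℕ} {D : Multiset (ℕ × ℂˣ)}
    (hcount : ∀ c : ℂˣ, S c = Multiset.card (D.filter fun p => c ∈ qString q p.1 p.2))
    {c : ℂˣ} (hc : S c ≠ 0) : ∃ p ∈ D, c ∈ qString q p.1 p.2 := by
  rw [hcount c] at hc
  have hne : D.filter (fun p => c ∈ qString q p.1 p.2) ≠ 0 := by
    intro h0
    rw [h0] at hc
    simp at hc
  obtain ⟨p, hp⟩ := Multiset.exists_mem_of_ne_zero hne
  exact ⟨p, (Multiset.mem_filter.mp hp).1, (Multiset.mem_filter.mp hp).2⟩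

lemma supp_of_mem {S : ℂˣ → ℕ} {D : Multiset (ℕ × ℂˣ)}
    (hcount : ∀ c : ℂˣ, S c = Multiset.card (D.filter fun p => c ∈ qString q p.1 p.2))
    {p : ℕ × ℂˣ} (hp : p ∈ D) {c : ℂˣ} (hc : c ∈ qString q p.1 p.2) : S c ≠ 0 := by
  rw [hcount c]
  have hpf : p ∈ D.filter fun p => c ∈ qString q p.1 p.2 := Multiset.mem_filter.mpr ⟨hp, hc⟩
  intro h0
  rw [Multiset.card_eq_zero] at h0
  rw [h0] at hpf
  exact absurd hpf (Multiset.notMem_zero p)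

/-- The maximal run occurs in any good decomposition. -/
lemma run_mem (hq : ∀ k : ℕ, 1 ≤ k → q ^ k ≠ 1) {S : ℂˣ → ℕ} {D : Multiset (ℕ × ℂˣ)}
    (hlen : ∀ p ∈ D, 1 ≤ p.1)
    (hcount : ∀ c : ℂˣ, S c = Multiset.card (D.filter fun p => c ∈ qString q p.1 p.2))
    (hgp : ∀ p ∈ D, ∀ p' ∈ D, GeneralPosition q p.1 p.2 p'.1 p'.2)
    {n₀ : ℕ} {a₀ : ℂˣ} (hn₀ : 0 < n₀)
    (hrun : ∀ z : ℤ, 0 ≤ z → z < n₀ → S (fQ q a₀ z) ≠ 0)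
    (hbl : S (fQ q a₀ (-1)) = 0) (hbr : S (fQ q a₀ (n₀:ℤ)) = 0) :
    (n₀, a₀) ∈ D := by
  have ha₀S : S a₀ ≠ 0 := by
    have := hrun 0 le_rfl (by exact_mod_cast hn₀)
    rwa [fQ_zero] at this
  obtain ⟨p1, hp1D, hp1mem⟩ := cover hcount ha₀S
  set F := D.toFinset.filter (fun p => a₀ ∈ qString q p.1 p.2) with hF
  have hFne : F.Nonempty := ⟨p1, Finset.mem_filter.mpr ⟨Multiset.mem_toFinset.mpr hp1D, hp1mem⟩⟩
  obtain ⟨pm, hpmF, hpmmax⟩ := F.exists_max_image Prod.fst hFne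
  have hpmD : pm ∈ D := Multiset.mem_toFinset.mp (Finset.mem_filter.mp hpmF).1
  have hpma₀ : a₀ ∈ qString q pm.1 pm.2 := (Finset.mem_filter.mp hpmF).2
  have hm : 1 ≤ pm.1 := hlen pm hpmD
  obtain ⟨i, hpm2, hi0, him⟩ := exists_coord hpma₀
  have hsupp : ∀ z : ℤ, i ≤ z → z < i + pm.1 → S (fQ q a₀ z) ≠ 0 := by
    intro z h1 h2
    apply supp_of_mem hcount hpmD
    rw [hpm2, qString_image]
    exact ⟨z, by simp only [Set.mem_Ico]; omega, rfl⟩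
  have hi_eq : i = 0 := by
    by_contra hne
    exact hsupp (-1) (by omega) (by omega) hbl
  have hend : i + pm.1 ≤ (n₀:ℤ) := by
    by_contra h
    exact hsupp (n₀:ℤ) (by omega) (by omega) hbr
  have hmn : pm.1 = n₀ := by
    by_contra hne
    have hxS : S (fQ q a₀ (pm.1:ℤ)) ≠ 0 := hrun pm.1 (by omega) (by omega)
    obtain ⟨p', hp'D, hp'mem⟩ := cover hcount hxS
    obtain ⟨i', hp'2, hi'le, hi'gt⟩ := exists_coord hp'mem
    have hp'2' : p'.2 = fQ q a₀ (i' + pm.1) := by rw [hp'2, fQ_fQ]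
    have hm' : 1 ≤ p'.1 := hlen p' hp'D
    by_cases hcase : i' + (pm.1:ℤ) ≤ 0 ∧ (pm.1:ℤ) ≤ (i' + pm.1) + p'.1
    · have ha₀p' : a₀ ∈ qString q p'.1 p'.2 := by
        rw [hp'2', qString_image]
        refine ⟨0, by simp only [Set.mem_Ico]; omega, fQ_zero a₀⟩
      have hle : p'.1 ≤ pm.1 :=
        hpmmax p' (Finset.mem_filter.mpr ⟨Multiset.mem_toFinset.mpr hp'D, ha₀p'⟩)
      omega
    · apply hgp pm hpmD p' hp'D
      have hpm2' : pm.2 = fQ q a₀ 0 := by rw [hpm2, hi_eq]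
      rw [hpm2', hp'2']
      apply special_of_touching hq a₀ (by omega) (by omega) (by omega) (by omega)
        (by omega) (by omega)
  have hpm : pm = (n₀, a₀) := by
    have h2 : pm.2 = a₀ := by rw [hpm2, hi_eq, fQ_zero]
    exact Prod.ext hmn h2
  rwa [← hpm]

/-- Existence of a maximal run through a point of the support. -/
lemma exists_run (hq : ∀ k : ℕ, 1 ≤ k → q ^ k ≠ 1) {S : ℂˣ → ℕ}
    (hS : (Function.support S).Finite) {a : ℂˣ} (ha : S a ≠ 0) :
    ∃ (n₀ : ℕ) (a₀ : ℂˣ), 0 < n₀ ∧ (∀ z : ℤ, 0 ≤ z → z < n₀ → S (fQ q a₀ z) ≠ 0) ∧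
      S (fQ q a₀ (-1)) = 0 ∧ S (fQ q a₀ (n₀:ℤ)) = 0 := by
  have hT : (fQ q a ⁻¹' Function.support S).Finite :=
    hS.preimage (Set.injOn_of_injective (fQ_inj hq a))
  obtain ⟨lb, hlb⟩ := hT.bddBelow
  obtain ⟨ub, hub⟩ := hT.bddAbove
  have hL : ∃ n : ℕ, S (fQ q a (-(n:ℤ) - 1)) = 0 := by
    refine ⟨(-lb).toNat + 1, ?_⟩
    by_contra h
    have : (-(((-lb).toNat + 1 : ℕ):ℤ) - 1) ∈ fQ q a ⁻¹' Function.support S := h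
    have := hlb this
    omega
  have hR : ∃ n : ℕ, S (fQ q a ((n:ℤ) + 1)) = 0 := by
    refine ⟨ub.toNat + 1, ?_⟩
    by_contra h
    have : ((((ub.toNat + 1 : ℕ)):ℤ) + 1) ∈ fQ q a ⁻¹' Function.support S := h
    have := hub this
    omega
  set l := Nat.find hL with hl
  set r := Nat.find hR with hr
  refine ⟨l + r + 1, fQ q a (-(l:ℤ)), by omega, ?_, ?_, ?_⟩
  · intro z h1 h2
    rw [fQ_fQ]
    rcases lt_trichotomy (z - l) 0 with hz | hz | hz
    · have hk : (l - z - 1).toNat < l := by omega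
      have := Nat.find_min hL hk
      have heq : (z + -(l:ℤ)) = (-(((l - z - 1).toNat:ℕ):ℤ) - 1) := by omega
      rw [heq]
      exact this
    · rw [show z + -(l:ℤ) = 0 by omega, fQ_zero]
      exact ha
    · have hk : (z - l - 1).toNat < r := by push_cast at h2 ⊢; omega
      have := Nat.find_min hR hk
      have heq : (z + -(l:ℤ)) = ((((z - l - 1).toNat:ℕ):ℤ) + 1) := by omega
      rw [heq]
      exact this
  · rw [fQ_fQ, show (-1 + -(l:ℤ)) = (-(l:ℤ) - 1) by ring]
    exact Nat.find_spec hL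
  · rw [fQ_fQ, show ((((l + r + 1:ℕ)):ℤ) + -(l:ℤ)) = ((r:ℤ) + 1) by push_cast; ring]
    exact Nat.find_spec hR

lemma good_zero (S : ℂˣ → ℕ) (h : ∀ c, S c = 0) : ∃! D : Multiset (ℕ × ℂˣ), Good q S D := by
  refine ⟨0, ⟨by simp, fun c => by simp [h c], by simp⟩, ?_⟩
  rintro D ⟨h1, h2, h3⟩
  apply Multiset.eq_zero_of_forall_notMem
  intro p hp
  have hmem : p.2 ∈ qString q p.1 p.2 := mem_self (h1 p hp) p.2
  have := supp_of_mem h2 hp hmem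
  exact this (h p.2)

lemma key (hq : ∀ k : ℕ, 1 ≤ k → q ^ k ≠ 1) :
    ∀ N : ℕ, ∀ S : ℂˣ → ℕ, ∀ hS : (Function.support S).Finite,
      hS.toFinset.sum S ≤ N → ∃! D : Multiset (ℕ × ℂˣ), Good q S D := by
  intro N
  induction N with
  | zero =>
    intro S hS hsum
    apply good_zero
    intro c
    by_contra hc
    have hmem : c ∈ hS.toFinset := by
      rw [Set.Finite.mem_toFinset]; exact hc
    have h2 := Finset.single_le_sum (f := S) (fun i _ => Nat.zero_le _) hmem
    have h3 : S c ≤ 0 := le_trans h2 hsum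
    omega
  | succ N ih =>
    intro S hS hsum
    by_cases hzero : ∀ c, S c = 0
    · exact good_zero S hzero
    · push_neg at hzero
      obtain ⟨a, ha⟩ := hzero
      obtain ⟨n₀, a₀, hn₀, hrun, hbl, hbr⟩ := exists_run hq hS ha
      have hmemR : ∀ c ∈ qString q n₀ a₀, S c ≠ 0 := by
        intro c hc
        rw [qString_base] at hc
        obtain ⟨z, hz, rfl⟩ := hc
        simp only [Set.mem_Ico] at hz
        exact hrun z hz.1 hz.2
      set S' := fun c => S c - (if c ∈ qString q n₀ a₀ then 1 else 0) with hS'def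
      have hS'le : ∀ c, S' c ≤ S c := fun c => Nat.sub_le _ _
      have hsupp' : Function.support S' ⊆ Function.support S := by
        intro c hc
        simp only [Function.mem_support] at hc ⊢
        intro h0
        apply hc
        simp [hS'def, h0]
      have hS' : (Function.support S').Finite := hS.subset hsupp'
      have hsum1 : hS'.toFinset.sum S' = hS.toFinset.sum S' := by
        apply Finset.sum_subset
        · intro c hc
          rw [Set.Finite.mem_toFinset] at hc ⊢
          exact hsupp' hc
        · intro c _ hnc
          rw [Set.Finite.mem_toFinset] at hnc
          exact Function.notMem_support.mp hnc
      have ha₀mem : a₀ ∈ hS.toFinset := by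
        rw [Set.Finite.mem_toFinset]
        exact hmemR a₀ (mem_self hn₀ a₀)
      have hsum2 : hS.toFinset.sum S' < hS.toFinset.sum S := by
        apply Finset.sum_lt_sum (fun c _ => hS'le c)
        refine ⟨a₀, ha₀mem, ?_⟩
        have h1 := hmemR a₀ (mem_self hn₀ a₀)
        simp only [hS'def, if_pos (mem_self hn₀ a₀)]
        omega
      obtain ⟨D'', hgood'', huniq''⟩ := ih S' hS' (by omega)
      obtain ⟨hlen'', hcount'', hgp''⟩ := hgood''
      have hsuppD'' : ∀ p ∈ D'', ∀ c ∈ qString q p.1 p.2, S c ≠ 0 := by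
        intro p hp c hc
        have h1 := supp_of_mem hcount'' hp hc
        have := hS'le c
        omega
      have hcnt : ∀ c : ℂˣ, S c =
          Multiset.card (((n₀, a₀) ::ₘ D'').filter fun p => c ∈ qString q p.1 p.2) := by
        intro c
        rw [Multiset.filter_cons, Multiset.card_add]
        have hc' := hcount'' c
        by_cases hcR : c ∈ qString q n₀ a₀
        · have h1 := hmemR c hcR
          have h2 : S' c = S c - 1 := by simp [hS'def, hcR]
          simp only [hcR, if_pos]
          rw [← hc']
          simp only [Multiset.card_singleton]
          omega
        · have h2 : S' c = S c := by simp [hS'def, hcR]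
          simp only [hcR, if_neg, not_false_iff]
          rw [← hc']
          simp only [Multiset.card_zero]
          omega
      refine ⟨(n₀, a₀) ::ₘ D'', ⟨?_, hcnt, ?_⟩, ?_⟩
      · intro p hp
        rcases Multiset.mem_cons.mp hp with h | h
        · rw [h]; exact hn₀
        · exact hlen'' p h
      · intro p hp p' hp'
        rcases Multiset.mem_cons.mp hp with h | h <;>
          rcases Multiset.mem_cons.mp hp' with h' | h'
        · rw [h, h']; exact gp_self
        · rw [h]
          exact gp_symm (gp_run hq hn₀ hbl hbr (hlen'' p' h') (hsuppD'' p' h'))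
        · rw [h']
          exact gp_run hq hn₀ hbl hbr (hlen'' p h) (hsuppD'' p h)
        · exact hgp'' p h p' h'
      · rintro D' ⟨hlen', hcount', hgp'⟩
        have hmemD' : (n₀, a₀) ∈ D' := run_mem hq hlen' hcount' hgp' hn₀ hrun hbl hbr
        have herase : D' = (n₀, a₀) ::ₘ D'.erase (n₀, a₀) := (Multiset.cons_erase hmemD').symm
        have hgoodE : Good q S' (D'.erase (n₀, a₀)) := by
          refine ⟨fun p hp => hlen' p (Multiset.mem_of_mem_erase hp), ?_,
            fun p hp p' hp' => hgp' _ (Multiset.mem_of_mem_erase hp) _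
              (Multiset.mem_of_mem_erase hp')⟩
          intro c
          have h1 := hcount' c
          rw [herase, Multiset.filter_cons, Multiset.card_add] at h1
          by_cases hcR : c ∈ qString q n₀ a₀
          · simp only [hcR, if_pos, Multiset.card_singleton] at h1
            have h3 := hmemR c hcR
            simp only [hS'def, if_pos hcR]
            omega
          · simp only [hcR, if_neg, not_false_iff, Multiset.card_zero] at h1
            simp only [hS'def, if_neg hcR]
            omega
        have hE := huniq'' _ hgoodE
        rw [herase, hE]

end QSAux

/-- Every finite multiset `S` of elements of `ℂ×` (a finitely supported function
`S : ℂ× → ℕ`) admits a unique decomposition as a multiset union of `q`-strings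
`S_{n₁,a₁}, …, S_{n_s,a_s}` which are pairwise in general position; the decomposition
is recorded as the finite multiset `D` of pairs `(n_t, a_t)`, and the counting condition
says that for each `c ∈ ℂ×`, `S c` is the number of indices `t` with `c ∈ S_{n_t,a_t}`. -/
theorem exists_unique_general_position_decomposition (q : ℂˣ)
    (hq : ∀ k : ℕ, 1 ≤ k → q ^ k ≠ 1) (S : ℂˣ → ℕ) (hS : (Function.support S).Finite) :
    ∃! D : Multiset (ℕ × ℂˣ),
      (∀ p ∈ D, 1 ≤ p.1) ∧
      (∀ c : ℂˣ, S c = Multiset.card (D.filter fun p => c ∈ qString q p.1 p.2)) ∧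
      (∀ p ∈ D, ∀ p' ∈ D, GeneralPosition q p.1 p.2 p'.1 p'.2) := by
  exact QSAux.key hq (hS.toFinset.sum S) S hS le_rfl
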